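/- Let W ∈ ℝ^{m×m} be symmetric. Suppose U_ℓ = Q Σ Rᵀ with Q ∈ ℝ^{m×k}, Qᵀ W Q = I_k, R ∈ ℝ^{ℓ×k}, Rᵀ R = I_k, Σ ∈ ℝ^{k×k} diagonal. Let C ∈ ℝ^{m×s} with C = Q Qᵀ W C, and let Q̃ Σ̃ R̃ᵀ be a thin SVD of [Σ | Qᵀ W C] (Q̃ ∈ ℝ^{k×k} orthogonal, Σ̃ ∈ ℝ^{k×k} diagonal nonnegative, R̃ ∈ ℝ^{(k+s)×k} with R̃ᵀ R̃ = I_k). Set Q̂ = Q Q̃, Σ̂ = Σ̃, R̂ = [[R,0],[0,I_s]] R̃. Let u ∈ ℝ^m, e = u − Q Qᵀ W u, p = (eᵀ W e)^{1/2} > 0, ẽ = e/p, and let Q̄ Σ̄ R̄ᵀ be a full SVD of Ȳ = [[Σ̂, Q̂ᵀ W u],[0, p]] ∈ ℝ^{(k+1)×(k+1)} (Q̄, R̄ orthogonal, Σ̄ diagonal nonnegative). Then [U_ℓ | C | u] = ( [Q | ẽ] · [[Q̃,0],[0,1]] · Q̄ ) Σ̄ ( [[R̂,0],[0,1]] R̄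 )ᵀ, the left factor L = [Q | ẽ] [[Q̃,0],[0,1]] Q̄ satisfies Lᵀ W L = I_{k+1}, and the right factor N = [[R̂,0],[0,1]] R̄ satisfies Nᵀ N = I_{k+1}; i.e., this is a core SVD of [U_ℓ | C | u] with respect to W. -/

import Mathlib

open Matrix

noncomputable section

/-- `[A | b]`: the matrix obtained by appending the column `b` to the matrix `A`. -/
def appendCol {m n : Type*} (A : Matrix m n ℝ) (b : m → ℝ) :
    Matrix m (n ⊕ Fin 1) ℝ :=
  Matrix.of fun i => Sum.elim (A i) fun _ => b i

/-- `[A | C]`: the matrix obtained by appending the columns of `C` after those of `A`. -/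
def appendCols {m n n' : Type*} (A : Matrix m n ℝ) (C : Matrix m n' ℝ) :
    Matrix m (n ⊕ n') ℝ :=
  Matrix.of fun i => Sum.elim (A i) (C i)

/-- Helper: multiplying a matrix by a one-column matrix built from a vector. -/
lemma mul_colOf {α β : Type*} [Fintype β] (A : Matrix α β ℝ) (v : β → ℝ) :
    A * (Matrix.of fun i (_ : Fin 1) => v i) =
      Matrix.of fun i (_ : Fin 1) => (A *ᵥ v) i := by
  ext i j
  simp [Matrix.mul_apply, Matrix.mulVec, dotProduct]

theorem stmt11 {m ℓ k s : ℕ}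
    (W : Matrix (Fin m) (Fin m) ℝ) (hW : W.IsSymm)
    (U : Matrix (Fin m) (Fin ℓ) ℝ)
    (Q : Matrix (Fin m) (Fin k) ℝ) (σ : Fin k → ℝ)
    (R : Matrix (Fin ℓ) (Fin k) ℝ)
    (hU : U = Q * diagonal σ * Rᵀ)
    (hQ : Qᵀ * W * Q = 1) (hR : Rᵀ * R = 1)
    (C : Matrix (Fin m) (Fin s) ℝ) (hC : C = Q * Qᵀ * W * C)
    -- thin SVD  [Σ | Qᵀ W C] = Qt Σt Rtᵀ
    (Qt : Matrix (Fin k) (Fin k) ℝ) (σt : Fin k → ℝ)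
    (Rt : Matrix (Fin k ⊕ Fin s) (Fin k) ℝ)
    (hQt : Qtᵀ * Qt = 1) (hQt' : Qt * Qtᵀ = 1)
    (hσt : ∀ i, 0 ≤ σt i) (hRt : Rtᵀ * Rt = 1)
    (hSVD : appendCols (diagonal σ) (Qᵀ * W * C) = Qt * diagonal σt * Rtᵀ)
    -- the new column u, its residual e, p = ‖e‖_W > 0, ẽ = e/p
    (u e : Fin m → ℝ) (he : e = u - Q *ᵥ (Qᵀ *ᵥ (W *ᵥ u)))
    (p : ℝ) (hp : p = Real.sqrt (e ⬝ᵥ (W *ᵥ e))) (hppos : 0 < p)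
    (etil : Fin m → ℝ) (hetil : etil = p⁻¹ • e)
    -- full SVD  Ȳ = [[Σ̂, Q̂ᵀ W u],[0,p]] = Qb Σb Rbᵀ  with  Q̂ = Q Qt, Σ̂ = Σt
    (Qb Rb : Matrix (Fin k ⊕ Fin 1) (Fin k ⊕ Fin 1) ℝ)
    (ν : Fin k ⊕ Fin 1 → ℝ)
    (hQb : Qbᵀ * Qb = 1) (hQb' : Qb * Qbᵀ = 1)
    (hRb : Rbᵀ * Rb = 1) (hRb' : Rb * Rbᵀ = 1)
    (hν : ∀ i, 0 ≤ ν i)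
    (hSVDb : fromBlocks (diagonal σt)
        (Matrix.of fun i (_ : Fin 1) => ((Q * Qt)ᵀ *ᵥ (W *ᵥ u)) i) 0
        (Matrix.of fun (_ : Fin 1) (_ : Fin 1) => p) = Qb * diagonal ν * Rbᵀ) :
    appendCol (appendCols U C) u =
      (appendCol Q etil *
          (fromBlocks Qt 0 0 1 : Matrix (Fin k ⊕ Fin 1) (Fin k ⊕ Fin 1) ℝ) * Qb) *
        diagonal ν *
        ((fromBlocks
            ((fromBlocks R 0 0 1 : Matrix (Fin ℓ ⊕ Fin s) (Fin k ⊕ Fin s) ℝ) * Rt)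
            0 0 1 : Matrix ((Fin ℓ ⊕ Fin s) ⊕ Fin 1) (Fin k ⊕ Fin 1) ℝ) * Rb)ᵀ ∧
    (appendCol Q etil *
        (fromBlocks Qt 0 0 1 : Matrix (Fin k ⊕ Fin 1) (Fin k ⊕ Fin 1) ℝ) * Qb)ᵀ * W *
      (appendCol Q etil *
        (fromBlocks Qt 0 0 1 : Matrix (Fin k ⊕ Fin 1) (Fin k ⊕ Fin 1) ℝ) * Qb) = 1 ∧
    ((fromBlocks
        ((fromBlocks R 0 0 1 : Matrix (Fin ℓ ⊕ Fin s) (Fin k ⊕ Fin s) ℝ) * Rt)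
        0 0 1 : Matrix ((Fin ℓ ⊕ Fin s) ⊕ Fin 1) (Fin k ⊕ Fin 1) ℝ) * Rb)ᵀ *
      ((fromBlocks
        ((fromBlocks R 0 0 1 : Matrix (Fin ℓ ⊕ Fin s) (Fin k ⊕ Fin s) ℝ) * Rt)
        0 0 1 : Matrix ((Fin ℓ ⊕ Fin s) ⊕ Fin 1) (Fin k ⊕ Fin 1) ℝ) * Rb) = 1 := by
  have hp0 : p ≠ 0 := ne_of_gt hppos
  -- notation
  set E : Matrix (Fin m) (Fin 1) ℝ := Matrix.of fun i (_ : Fin 1) => etil i with hE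
  set F : Matrix (Fin m) (Fin k ⊕ Fin 1) ℝ := fromCols Q E with hF
  set G : Matrix (Fin k ⊕ Fin 1) (Fin k ⊕ Fin 1) ℝ := fromBlocks Qt 0 0 1 with hG
  set B : Matrix (Fin ℓ ⊕ Fin s) (Fin k ⊕ Fin s) ℝ := fromBlocks R 0 0 1 with hB
  set H : Matrix ((Fin ℓ ⊕ Fin s) ⊕ Fin 1) (Fin k ⊕ Fin 1) ℝ :=
    fromBlocks (B * Rt) 0 0 1 with hH
  have happF : appendCol Q etil = F := rfl
  -- basic vector facts
  have hQWe : Qᵀ *ᵥ (W *ᵥ e) = 0 := by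
    rw [he]
    simp only [Matrix.mulVec_sub, Matrix.mulVec_mulVec, ← Matrix.mul_assoc, hQ,
      Matrix.one_mul, sub_self]
  have hQWetil : Qᵀ *ᵥ (W *ᵥ etil) = 0 := by
    rw [hetil, Matrix.mulVec_smul, Matrix.mulVec_smul, hQWe, smul_zero]
  have hewe : e ⬝ᵥ (W *ᵥ e) = p ^ 2 := by
    have h0 : 0 < e ⬝ᵥ (W *ᵥ e) := by
      rw [hp] at hppos; exact Real.sqrt_pos.mp hppos
    rw [hp, Real.sq_sqrt h0.le]
  have hetilW : etil ⬝ᵥ (W *ᵥ etil) = 1 := by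
    rw [hetil, Matrix.mulVec_smul, smul_dotProduct, dotProduct_smul, hewe,
      smul_eq_mul, smul_eq_mul]
    field_simp
  -- block computations for the left factor
  have hQWE : Qᵀ * W * E = 0 := by
    rw [hE, Matrix.mul_assoc, mul_colOf, mul_colOf]
    simp only [Matrix.mulVec_mulVec]
    ext i j
    have := congrFun hQWetil i
    simp only [Matrix.mulVec_mulVec] at this
    simp [this]
  have hEWQ : Eᵀ * W * Q = 0 := by
    have : (Qᵀ * W * E)ᵀ = Eᵀ * W * Q := by
      rw [Matrix.transpose_mul, Matrix.transpose_mul, Matrix.transpose_transpose,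
        hW.eq, Matrix.mul_assoc]
    rw [← this, hQWE, Matrix.transpose_zero]
  have hEWE : Eᵀ * W * E = 1 := by
    rw [hE, Matrix.mul_assoc, mul_colOf]
    ext i j
    fin_cases i; fin_cases j
    simpa [Matrix.mul_apply, dotProduct] using hetilW
  have hFWF : Fᵀ * W * F = 1 := by
    rw [hF, transpose_fromCols, fromRows_mul, fromRows_mul_fromCols,
      hQ, hQWE, hEWQ, hEWE]
    exact Matrix.fromBlocks_one
  have hGG : Gᵀ * G = 1 := by
    rw [hG, fromBlocks_transpose, fromBlocks_multiply]
    simp [hQt, Matrix.fromBlocks_one]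
  -- left factor is W-orthonormal
  have goal2 : (F * G * Qb)ᵀ * W * (F * G * Qb) = 1 := by
    rw [Matrix.transpose_mul, Matrix.transpose_mul]
    calc Qbᵀ * (Gᵀ * Fᵀ) * W * (F * G * Qb)
        = Qbᵀ * (Gᵀ * ((Fᵀ * W * F) * G)) * Qb := by
          simp only [Matrix.mul_assoc]
      _ = 1 := by rw [hFWF, Matrix.one_mul, hGG, Matrix.mul_one, hQb]
  -- right factor is orthonormal
  have hBB : Bᵀ * B = 1 := by
    rw [hB, fromBlocks_transpose, fromBlocks_multiply]
    simp [hR, Matrix.fromBlocks_one]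
  have hHH : Hᵀ * H = 1 := by
    rw [hH, fromBlocks_transpose, fromBlocks_multiply]
    have h1 : Rtᵀ * Bᵀ * (B * Rt) = 1 := by
      calc Rtᵀ * Bᵀ * (B * Rt) = Rtᵀ * (Bᵀ * B) * Rt := by simp only [Matrix.mul_assoc]
        _ = 1 := by rw [hBB, Matrix.mul_one, hRt]
    simp [h1, Matrix.fromBlocks_one]
  have goal3 : (H * Rb)ᵀ * (H * Rb) = 1 := by
    rw [Matrix.transpose_mul]
    calc Rbᵀ * Hᵀ * (H * Rb) = Rbᵀ * (Hᵀ * H) * Rb := by simp only [Matrix.mul_assoc]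
      _ = 1 := by rw [hHH, Matrix.mul_one, hRb]
  -- the factorization identity
  set c : Matrix (Fin k) (Fin 1) ℝ :=
    Matrix.of fun i (_ : Fin 1) => ((Q * Qt)ᵀ *ᵥ (W *ᵥ u)) i with hc
  set pM : Matrix (Fin 1) (Fin 1) ℝ := Matrix.of fun _ _ => p with hpM
  have goal1 : fromCols (fromCols U C) (Matrix.of fun i (_ : Fin 1) => u i)
      = (F * G * Qb) * diagonal ν * (H * Rb)ᵀ := by
    have hY : (F * G * Qb) * diagonal ν * (H * Rb)ᵀ
        = F * (G * (fromBlocks (diagonal σt) c 0 pM) * Hᵀ) := by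
      rw [Matrix.transpose_mul, hSVDb]
      simp only [Matrix.mul_assoc]
    rw [hY]
    have hGY : G * fromBlocks (diagonal σt) c 0 pM
        = fromBlocks (Qt * diagonal σt) (Qt * c) 0 pM := by
      rw [hG, fromBlocks_multiply]
      simp
    have hHt : Hᵀ = fromBlocks (Rtᵀ * Bᵀ) 0 0 1 := by
      rw [hH, fromBlocks_transpose, Matrix.transpose_mul]
      simp
    rw [hGY, hHt, fromBlocks_multiply]
    have hM : Qt * diagonal σt * (Rtᵀ * Bᵀ)
        = fromCols (diagonal σ) (Qᵀ * W * C) * Bᵀ := by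
      rw [← Matrix.mul_assoc, ← hSVD]; rfl
    have hBT : Bᵀ = fromBlocks Rᵀ 0 0 1 := by
      rw [hB, fromBlocks_transpose]; simp
    have hMB : fromCols (diagonal σ) (Qᵀ * W * C) * Bᵀ
        = fromCols (diagonal σ * Rᵀ) (Qᵀ * W * C) := by
      rw [hBT, fromCols_mul_fromBlocks]
      simp
    rw [hM, hMB]
    simp only [Matrix.mul_zero, Matrix.zero_mul, Matrix.mul_one, Matrix.one_mul,
      add_zero, zero_add]
    have hFB : F * fromBlocks (fromCols (diagonal σ * Rᵀ) (Qᵀ * W * C)) (Qt * c) 0 pM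
        = fromCols (Q * fromCols (diagonal σ * Rᵀ) (Qᵀ * W * C)) (Q * (Qt * c) + E * pM) := by
      rw [hF, fromCols_mul_fromBlocks]
      simp
    rw [hFB]
    have h1 : Q * fromCols (diagonal σ * Rᵀ) (Qᵀ * W * C) = fromCols U C := by
      rw [mul_fromCols, ← Matrix.mul_assoc, ← hU]
      congr 1
      rw [← Matrix.mul_assoc, ← Matrix.mul_assoc, ← hC]
    have h2 : Q * (Qt * c) + E * pM = Matrix.of fun i (_ : Fin 1) => u i := by
      have hc2 : Q * (Qt * c)
          = Matrix.of fun i (_ : Fin 1) => (Q *ᵥ (Qᵀ *ᵥ (W *ᵥ u))) i := by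
        rw [← Matrix.mul_assoc, hc, mul_colOf]
        have hqq : Q * Qt * Qtᵀ = Q := by rw [Matrix.mul_assoc, hQt', Matrix.mul_one]
        congr 1
        ext i
        simp only [Matrix.mulVec_mulVec, Matrix.transpose_mul, ← Matrix.mul_assoc, hqq]
      have hEp : E * pM = Matrix.of fun i (_ : Fin 1) => e i := by
        ext i j
        simp [hE, hpM, Matrix.mul_apply, hetil]
        field_simp
      rw [hc2, hEp]
      ext i j
      have := congrFun he i
      simp at this ⊢
      simp [this]
    rw [h1, h2]
  exact ⟨goal1, goal2, goal3⟩
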